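/- Under the artificial target φ, the conditional density of the remaining particles and all ancestor indices given {θ, x_{1:T}^{j_{1:T}}, j_{1:T}} equals [ψ^θ(X_{1:T}, I_{2:T}) / (R_1^θ(x_1^{j_1}) ∏_{t=2}^T M_t^θ(i_t^{j_t}, x_t^{j_t}))] · ∏_{t=2}^T w_{t-1}^{i_t^{j_t}} f_θ(x_t^{j_t} | x_{t-1}^{i_t^{j_t}}) / (Σ_l w_{t-1}^l f_θ(x_t^{j_t} | x_{t-1}^l)), which is exactly the density of the variables generated by the conditional auxiliary particle filter. -/

import Mathlib

open MeasureTheory Finset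

/-! ### The PG-BSi construction (Lindsten–Schön).
Times are `0`-based: index `t : Fin T` is time `t+1` of the paper; ancestor indices for
time `t ≥ 1` are stored at `I ⟨t-1, _⟩`.  Throughout, `mu0` is the initial density
`μ_θ(x_1)`, `g t x = g_θ(y_{t+1} | x)` (observations fixed), `f x xp = f_θ(x | xp)`,
`vadj t x = ν_t^θ(x, y_{t+2})` are the adjustment multipliers, and `R1`, `Rt` are the
proposal densities. -/

/-- The importance weight `w_t^m = W_t^θ(x_t^m, x_{t-1}^{i_t^m})` of the auxiliary
particle filter, with
`W_t^θ(x, xp) = g_θ(y_t|x) f_θ(x|xp) / (ν_{t-1}^θ(xp, y_t) R_t^θ(x|xp))` for `t ≥ 2`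
and `W_1^θ(x) = g_θ(y_1|x) μ_θ(x) / R_1^θ(x)`. -/
noncomputable def pgWgt {X : Type*} (N T : ℕ)
    (mu0 : X → ℝ) (g : ℕ → X → ℝ) (f : X → X → ℝ)
    (vadj : ℕ → X → ℝ) (R1 : X → ℝ) (Rt : ℕ → X → X → ℝ)
    (P : Fin T → Fin N → X) (I : Fin (T - 1) → Fin N → Fin N)
    (t : Fin T) (m : Fin N) : ℝ :=
  if h : 0 < t.val then
    g t.val (P t m) *
        f (P t m) (P ⟨t.val - 1, by have := t.isLt; omega⟩
          (I ⟨t.val - 1, by have := t.isLt; omega⟩ m)) /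
      (vadj (t.val - 1) (P ⟨t.val - 1, by have := t.isLt; omega⟩
          (I ⟨t.val - 1, by have := t.isLt; omega⟩ m)) *
        Rt t.val (P t m) (P ⟨t.val - 1, by have := t.isLt; omega⟩
          (I ⟨t.val - 1, by have := t.isLt; omega⟩ m)))
  else g 0 (P t m) * mu0 (P t m) / R1 (P t m)

/-- The APF proposal kernel density
`M_t^θ(i, x) = (w_{t-1}^i ν_{t-1}^i / ∑_l w_{t-1}^l ν_{t-1}^l) R_t^θ(x | x_{t-1}^i)`
(for `0 < t.val`; the value at `t = 0` is irrelevant and set to `0`). -/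
noncomputable def pgM {X : Type*} (N T : ℕ)
    (mu0 : X → ℝ) (g : ℕ → X → ℝ) (f : X → X → ℝ)
    (vadj : ℕ → X → ℝ) (R1 : X → ℝ) (Rt : ℕ → X → X → ℝ)
    (P : Fin T → Fin N → X) (I : Fin (T - 1) → Fin N → Fin N)
    (t : Fin T) (i : Fin N) (x : X) : ℝ :=
  if h : 0 < t.val then
    (pgWgt N T mu0 g f vadj R1 Rt P I ⟨t.val - 1, by have := t.isLt; omega⟩ i *
          vadj (t.val - 1) (P ⟨t.val - 1, by have := t.isLt; omega⟩ i) /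
        ∑ l, pgWgt N T mu0 g f vadj R1 Rt P I ⟨t.val - 1, by have := t.isLt; omega⟩ l *
          vadj (t.val - 1) (P ⟨t.val - 1, by have := t.isLt; omega⟩ l)) *
      Rt t.val x (P ⟨t.val - 1, by have := t.isLt; omega⟩ i)
  else 0

/-- The joint density `ψ^θ(X_{1:T}, I_{2:T}) = ∏_l R_1^θ(x_1^l) ∏_{t=2}^T ∏_m M_t^θ(i_t^m, x_t^m)`
of all variables generated by the auxiliary particle filter. -/
noncomputable def pgPsi {X : Type*} (N T : ℕ) (hT : 1 ≤ T)
    (mu0 : X → ℝ) (g : ℕ → X → ℝ) (f : X → X → ℝ)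
    (vadj : ℕ → X → ℝ) (R1 : X → ℝ) (Rt : ℕ → X → X → ℝ)
    (P : Fin T → Fin N → X) (I : Fin (T - 1) → Fin N → Fin N) : ℝ :=
  (∏ l, R1 (P ⟨0, by omega⟩ l)) *
    ∏ t : Fin T,
      if h : 0 < t.val then
        ∏ m, pgM N T mu0 g f vadj R1 Rt P I t
          (I ⟨t.val - 1, by have := t.isLt; omega⟩ m) (P t m)
      else 1

/-- The backward-simulation factor
`w_{t-1}^{i_t^{j_t}} f_θ(x_t^{j_t} | x_{t-1}^{i_t^{j_t}}) / ∑_l w_{t-1}^l f_θ(x_t^{j_t} | x_{t-1}^l)`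
(for `0 < t.val`; equal to `1` at `t = 0`). -/
noncomputable def pgBwd {X : Type*} (N T : ℕ)
    (mu0 : X → ℝ) (g : ℕ → X → ℝ) (f : X → X → ℝ)
    (vadj : ℕ → X → ℝ) (R1 : X → ℝ) (Rt : ℕ → X → X → ℝ)
    (P : Fin T → Fin N → X) (I : Fin (T - 1) → Fin N → Fin N)
    (j : Fin T → Fin N) (t : Fin T) : ℝ :=
  if h : 0 < t.val then
    pgWgt N T mu0 g f vadj R1 Rt P I ⟨t.val - 1, by have := t.isLt; omega⟩
        (I ⟨t.val - 1, by have := t.isLt; omega⟩ (j t)) *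
      f (P t (j t)) (P ⟨t.val - 1, by have := t.isLt; omega⟩
        (I ⟨t.val - 1, by have := t.isLt; omega⟩ (j t))) /
      ∑ l, pgWgt N T mu0 g f vadj R1 Rt P I ⟨t.val - 1, by have := t.isLt; omega⟩ l *
        f (P t (j t)) (P ⟨t.val - 1, by have := t.isLt; omega⟩ l)
  else 1

/-- The artificial target density of the PG-BSi sampler (for a fixed parameter `θ`):
`φ(X_{1:T}, I_{2:T}, j_{1:T}) = [post(x_{1:T}^{j_{1:T}})/N^T] ·
[ψ^θ / (R_1^θ(x_1^{j_1}) ∏_{t=2}^T M_t^θ(i_t^{j_t}, x_t^{j_t}))] ·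
∏_{t=2}^T w_{t-1}^{i_t^{j_t}} f_θ(x_t^{j_t}|x_{t-1}^{i_t^{j_t}}) / ∑_l w_{t-1}^l f_θ(x_t^{j_t}|x_{t-1}^l)`,
where `post` is the joint posterior density `p(θ, x_{1:T} | y_{1:T})` as a function of the
state trajectory. -/
noncomputable def pgPhi {X : Type*} (N T : ℕ) (hT : 1 ≤ T)
    (post : (Fin T → X) → ℝ)
    (mu0 : X → ℝ) (g : ℕ → X → ℝ) (f : X → X → ℝ)
    (vadj : ℕ → X → ℝ) (R1 : X → ℝ) (Rt : ℕ → X → X → ℝ)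
    (P : Fin T → Fin N → X) (I : Fin (T - 1) → Fin N → Fin N)
    (j : Fin T → Fin N) : ℝ :=
  post (fun t => P t (j t)) / (N : ℝ) ^ T *
    (pgPsi N T hT mu0 g f vadj R1 Rt P I /
      (R1 (P ⟨0, by omega⟩ (j ⟨0, by omega⟩)) *
        ∏ t : Fin T,
          if h : 0 < t.val then
            pgM N T mu0 g f vadj R1 Rt P I t
              (I ⟨t.val - 1, by have := t.isLt; omega⟩ (j t)) (P t (j t))
          else 1)) *
    ∏ t : Fin T, pgBwd N T mu0 g f vadj R1 Rt P I j t


lemma pgWgt_pos {X : Type*} (N T : ℕ)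
    (mu0 : X → ℝ) (g : ℕ → X → ℝ) (f : X → X → ℝ)
    (vadj : ℕ → X → ℝ) (R1 : X → ℝ) (Rt : ℕ → X → X → ℝ)
    (hmu0p : ∀ x, 0 < mu0 x) (hgp : ∀ t x, 0 < g t x) (hfp : ∀ a b, 0 < f a b)
    (hvp : ∀ t x, 0 < vadj t x) (hR1p : ∀ x, 0 < R1 x) (hRtp : ∀ t a b, 0 < Rt t a b)
    (P : Fin T → Fin N → X) (I : Fin (T - 1) → Fin N → Fin N)
    (t : Fin T) (m : Fin N) :
    0 < pgWgt N T mu0 g f vadj R1 Rt P I t m := by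
  unfold pgWgt
  split
  · exact div_pos (mul_pos (hgp _ _) (hfp _ _)) (mul_pos (hvp _ _) (hRtp _ _ _))
  · exact div_pos (mul_pos (hgp _ _) (hmu0p _)) (hR1p _)

lemma pgM_pos {X : Type*} (N T : ℕ) (hN : 1 ≤ N)
    (mu0 : X → ℝ) (g : ℕ → X → ℝ) (f : X → X → ℝ)
    (vadj : ℕ → X → ℝ) (R1 : X → ℝ) (Rt : ℕ → X → X → ℝ)
    (hmu0p : ∀ x, 0 < mu0 x) (hgp : ∀ t x, 0 < g t x) (hfp : ∀ a b, 0 < f a b)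
    (hvp : ∀ t x, 0 < vadj t x) (hR1p : ∀ x, 0 < R1 x) (hRtp : ∀ t a b, 0 < Rt t a b)
    (P : Fin T → Fin N → X) (I : Fin (T - 1) → Fin N → Fin N)
    (t : Fin T) (ht : 0 < t.val) (i : Fin N) (x : X) :
    0 < pgM N T mu0 g f vadj R1 Rt P I t i x := by
  have hwv : ∀ l : Fin N, 0 < pgWgt N T mu0 g f vadj R1 Rt P I
      ⟨t.val - 1, by have := t.isLt; omega⟩ l *
      vadj (t.val - 1) (P ⟨t.val - 1, by have := t.isLt; omega⟩ l) := fun l =>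
    mul_pos (pgWgt_pos N T mu0 g f vadj R1 Rt hmu0p hgp hfp hvp hR1p hRtp P I _ _) (hvp _ _)
  have hne : (Finset.univ : Finset (Fin N)).Nonempty := by
    have : Nonempty (Fin N) := ⟨⟨0, hN⟩⟩
    exact Finset.univ_nonempty
  unfold pgM
  rw [dif_pos ht]
  exact mul_pos (div_pos (hwv i) (Finset.sum_pos (fun l _ => hwv l) hne)) (hRtp _ _ _)

/-- **Proposition 2: the conditional of `φ` is the density of the conditional APF.**
Since the marginal of `φ` in `(x_{1:T}^{j_{1:T}}, j_{1:T})` is `post/N^T`, the conditional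
density of the remaining particles and all ancestor indices given
`{x_{1:T}^{j_{1:T}}, j_{1:T}}` is `φ / (post/N^T)`; the statement asserts that `φ`
factorizes as `(post/N^T)` times exactly the density of the variables generated by the
conditional auxiliary particle filter: the off-path initial proposals `R1`, the off-path
proposal kernels `M_t`, and the ancestor-index probabilities
`w_{t-1}^m f_θ(x_t^{j_t}|x_{t-1}^m)/∑_l w_{t-1}^l f_θ(x_t^{j_t}|x_{t-1}^l)` on the path. -/
theorem pgbsi_conditional_is_capf
    {X : Type*}
    (N T : ℕ) (hN : 1 ≤ N) (hT : 1 ≤ T)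
    (post : (Fin T → X) → ℝ)
    (mu0 : X → ℝ) (g : ℕ → X → ℝ) (f : X → X → ℝ)
    (vadj : ℕ → X → ℝ) (R1 : X → ℝ) (Rt : ℕ → X → X → ℝ)
    -- positivity of all the densities involved
    (hmu0p : ∀ x, 0 < mu0 x) (hgp : ∀ t x, 0 < g t x) (hfp : ∀ a b, 0 < f a b)
    (hvp : ∀ t x, 0 < vadj t x) (hR1p : ∀ x, 0 < R1 x) (hRtp : ∀ t a b, 0 < Rt t a b)
    (P : Fin T → Fin N → X) (I : Fin (T - 1) → Fin N → Fin N)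
    (j : Fin T → Fin N) :
    pgPhi N T hT post mu0 g f vadj R1 Rt P I j
      = (post (fun t => P t (j t)) / (N : ℝ) ^ T) *
        ((∏ m ∈ Finset.univ \ {j ⟨0, by omega⟩}, R1 (P ⟨0, by omega⟩ m)) *
          (∏ t : Fin T,
            if h : 0 < t.val then
              ∏ m ∈ Finset.univ \ {j t},
                pgM N T mu0 g f vadj R1 Rt P I t
                  (I ⟨t.val - 1, by have := t.isLt; omega⟩ m) (P t m)
            else 1) *
          ∏ t : Fin T, pgBwd N T mu0 g f vadj R1 Rt P I j t) := by
  have hMpos := pgM_pos N T hN mu0 g f vadj R1 Rt hmu0p hgp hfp hvp hR1p hRtp P I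
  have hR1split : (∏ l, R1 (P ⟨0, by omega⟩ l))
      = R1 (P ⟨0, by omega⟩ (j ⟨0, by omega⟩)) *
        ∏ m ∈ Finset.univ \ {j ⟨0, by omega⟩}, R1 (P ⟨0, by omega⟩ m) := by
    rw [Finset.sdiff_singleton_eq_erase]
    exact (Finset.mul_prod_erase Finset.univ (fun m => R1 (P ⟨0, by omega⟩ m))
      (Finset.mem_univ (j ⟨0, by omega⟩))).symm
  have hMsplit : (∏ t : Fin T,
      if h : 0 < t.val then
        ∏ m, pgM N T mu0 g f vadj R1 Rt P I t
          (I ⟨t.val - 1, by have := t.isLt; omega⟩ m) (P t m)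
      else 1)
    = (∏ t : Fin T,
        if h : 0 < t.val then
          pgM N T mu0 g f vadj R1 Rt P I t
            (I ⟨t.val - 1, by have := t.isLt; omega⟩ (j t)) (P t (j t))
        else 1) *
      (∏ t : Fin T,
        if h : 0 < t.val then
          ∏ m ∈ Finset.univ \ {j t},
            pgM N T mu0 g f vadj R1 Rt P I t
              (I ⟨t.val - 1, by have := t.isLt; omega⟩ m) (P t m)
        else 1) := by
    rw [← Finset.prod_mul_distrib]
    refine Finset.prod_congr rfl fun t _ => ?_
    by_cases h : 0 < t.val
    · rw [dif_pos h, dif_pos h, dif_pos h, Finset.sdiff_singleton_eq_erase]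
      exact (Finset.mul_prod_erase Finset.univ
        (fun m => pgM N T mu0 g f vadj R1 Rt P I t
          (I ⟨t.val - 1, by have := t.isLt; omega⟩ m) (P t m))
        (Finset.mem_univ (j t))).symm
    · simp [h]
  have hDpos : 0 < R1 (P ⟨0, by omega⟩ (j ⟨0, by omega⟩)) *
      ∏ t : Fin T,
        if h : 0 < t.val then
          pgM N T mu0 g f vadj R1 Rt P I t
            (I ⟨t.val - 1, by have := t.isLt; omega⟩ (j t)) (P t (j t))
        else 1 := by
    refine mul_pos (hR1p _) (Finset.prod_pos fun t _ => ?_)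
    by_cases h : 0 < t.val
    · rw [dif_pos h]; exact hMpos t h _ _
    · rw [dif_neg h]; exact one_pos
  unfold pgPhi pgPsi
  rw [hR1split, hMsplit]
  have hD1 := ne_of_gt (hR1p (P ⟨0, by omega⟩ (j ⟨0, by omega⟩)))
  have hD2 := right_ne_zero_of_mul hDpos.ne'
  field_simp
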